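/- In the one-period model on Ω = (0,1], a probability measure Q ≪ P with density values q_i(n) on J_n^i is a separating measure (i.e., α·X₁ ∈ L¹(Q) and E_Q[α·X₁] ≤ 0 for every admissible strategy α) if and only if q₁(n) = n·q₂(n) for every n ≥ 1. -/

import Mathlib

open MeasureTheory
open scoped ENNReal NNReal

/-- `P`: Lebesgue measure restricted to `Ω = (0,1]`. -/
noncomputable def Pmeas : Measure ℝ := MeasureTheory.volume.restrict (Set.Ioc 0 1)

/-- `I_n = (2^{-n}, 2^{-(n-1)}]` (intended for `n ≥ 1`). -/
def Iset (n : ℕ) : Set ℝ := Set.Ioc ((2 : ℝ) ^ n)⁻¹ ((2 : ℝ) ^ (n - 1))⁻¹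

/-- `J_n^1 = (2^{-n}, 3·2^{-(n+1)}]`. -/
def J1 (n : ℕ) : Set ℝ := Set.Ioc ((2 : ℝ) ^ n)⁻¹ (3 * ((2 : ℝ) ^ (n + 1))⁻¹)

/-- `J_n^2 = (3·2^{-(n+1)}, 2^{-(n-1)}]`. -/
def J2 (n : ℕ) : Set ℝ := Set.Ioc (3 * ((2 : ℝ) ^ (n + 1))⁻¹) ((2 : ℝ) ^ (n - 1))⁻¹

/-- A strategy: a function constant, equal to some `a n`, on each `I_n`. -/
def IsStrategy (α : ℝ → ℝ) : Prop :=
  ∃ a : ℕ → ℝ, ∀ n : ℕ, 1 ≤ n → ∀ ω ∈ Iset n, α ω = a n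

/-- An admissible strategy: a strategy whose gain `α·X₁` is bounded below by a constant
`-c`, `P`-a.s. -/
def IsAdmissible (X₁ α : ℝ → ℝ) : Prop :=
  IsStrategy α ∧ ∃ c : ℝ, 0 ≤ c ∧ ∀ᵐ ω ∂Pmeas, -c ≤ α ω * X₁ ω

namespace SepAux

lemma two_pow_pos (k : ℕ) : (0:ℝ) < 2 ^ k := by positivity

lemma lt1 (k : ℕ) : ((2:ℝ) ^ (k+1))⁻¹ < 3 * ((2:ℝ) ^ (k+2))⁻¹ := by
  have h : (0:ℝ) < ((2:ℝ) ^ (k+1))⁻¹ := by positivity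
  rw [pow_succ (2:ℝ) (k+1), mul_inv]
  nlinarith [h]

lemma lt2 (k : ℕ) : 3 * ((2:ℝ) ^ (k+2))⁻¹ < ((2:ℝ) ^ k)⁻¹ := by
  have h : (0:ℝ) < ((2:ℝ) ^ k)⁻¹ := by positivity
  have e : (2:ℝ) ^ (k+2) = 2 ^ k * 4 := by ring
  rw [e, mul_inv]
  nlinarith [h]

lemma Iset_eq (k : ℕ) : Iset (k+1) = Set.Ioc ((2:ℝ)^(k+1))⁻¹ ((2:ℝ)^k)⁻¹ := by
  simp [Iset]

lemma J_union (k : ℕ) : J1 (k+1) ∪ J2 (k+1) = Iset (k+1) := by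
  rw [Iset_eq, J1, J2]
  simp only [Nat.add_sub_cancel]
  exact Set.Ioc_union_Ioc_eq_Ioc (le_of_lt (lt1 k)) (le_of_lt (lt2 k))

lemma measJ1 (n : ℕ) : MeasurableSet (J1 n) := measurableSet_Ioc
lemma measJ2 (n : ℕ) : MeasurableSet (J2 n) := measurableSet_Ioc
lemma measIset (n : ℕ) : MeasurableSet (Iset n) := measurableSet_Ioc

lemma len1 (k : ℕ) : 3 * ((2:ℝ)^(k+2))⁻¹ - ((2:ℝ)^(k+1))⁻¹ = ((2:ℝ)^(k+2))⁻¹ := by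
  have h := (two_pow_pos k).ne'
  field_simp
  ring

lemma len2 (k : ℕ) : ((2:ℝ)^k)⁻¹ - 3 * ((2:ℝ)^(k+2))⁻¹ = ((2:ℝ)^(k+2))⁻¹ := by
  have h := (two_pow_pos k).ne'
  field_simp
  ring

lemma J1_subset_unit (k : ℕ) : J1 (k+1) ⊆ Set.Ioc 0 1 := by
  rw [J1]
  apply Set.Ioc_subset_Ioc (by positivity)
  have h4 : (4:ℝ) ≤ 2 ^ (k+1+1) := by
    have : (1:ℝ) ≤ 2 ^ k := one_le_pow₀ (by norm_num)
    calc (4:ℝ) = 4 * 1 := by ring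
    _ ≤ 4 * 2 ^ k := by nlinarith
    _ = 2 ^ (k+1+1) := by ring
  have h : ((2:ℝ) ^ (k+1+1))⁻¹ ≤ 4⁻¹ := by
    apply inv_anti₀ (by norm_num) h4
  nlinarith [h]

lemma J2_subset_unit (k : ℕ) : J2 (k+1) ⊆ Set.Ioc 0 1 := by
  rw [J2]
  apply Set.Ioc_subset_Ioc
  · positivity
  · simp only [Nat.add_sub_cancel]
    have : (1:ℝ) ≤ 2 ^ k := one_le_pow₀ (by norm_num)
    rw [inv_le_one_iff₀]
    right; exact this

lemma P_J1 (k : ℕ) : Pmeas (J1 (k+1)) = ENNReal.ofReal ((2:ℝ)^(k+2))⁻¹ := by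
  rw [Pmeas, Measure.restrict_apply (measJ1 _),
    Set.inter_eq_left.mpr (J1_subset_unit k)]
  rw [J1, Real.volume_Ioc]
  congr 1
  exact len1 k

lemma P_J2 (k : ℕ) : Pmeas (J2 (k+1)) = ENNReal.ofReal ((2:ℝ)^(k+2))⁻¹ := by
  rw [Pmeas, Measure.restrict_apply (measJ2 _),
    Set.inter_eq_left.mpr (J2_subset_unit k)]
  rw [J2, Real.volume_Ioc]
  simp only [Nat.add_sub_cancel]
  congr 1
  exact len2 k

lemma Iset_disj {m n : ℕ} (h : m ≠ n) : Disjoint (Iset (m+1)) (Iset (n+1)) := by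
  rw [Iset_eq, Iset_eq, Set.Ioc_disjoint_Ioc]
  have key : ∀ a b : ℕ, a < b → ((2:ℝ)^b)⁻¹ ≤ ((2:ℝ)^(a+1))⁻¹ := by
    intro a b hab
    apply inv_anti₀ (by positivity)
    exact pow_le_pow_right₀ (by norm_num) hab
  rcases h.lt_or_gt with hl | hl
  · calc min ((2:ℝ)^m)⁻¹ ((2:ℝ)^n)⁻¹ ≤ ((2:ℝ)^n)⁻¹ := min_le_right _ _
      _ ≤ ((2:ℝ)^(m+1))⁻¹ := key m n hl
      _ ≤ max ((2:ℝ)^(m+1))⁻¹ ((2:ℝ)^(n+1))⁻¹ := le_max_left _ _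
  · calc min ((2:ℝ)^m)⁻¹ ((2:ℝ)^n)⁻¹ ≤ ((2:ℝ)^m)⁻¹ := min_le_left _ _
      _ ≤ ((2:ℝ)^(n+1))⁻¹ := key n m hl
      _ ≤ max ((2:ℝ)^(m+1))⁻¹ ((2:ℝ)^(n+1))⁻¹ := le_max_right _ _

lemma J1_subset_Iset (k : ℕ) : J1 (k+1) ⊆ Iset (k+1) := by
  rw [← J_union]; exact Set.subset_union_left

lemma J2_subset_Iset (k : ℕ) : J2 (k+1) ⊆ Iset (k+1) := by
  rw [← J_union]; exact Set.subset_union_right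

lemma J1_disj_J2 (k : ℕ) : Disjoint (J1 (k+1)) (J2 (k+1)) := by
  rw [J1, J2]; exact Set.Ioc_disjoint_Ioc_of_le le_rfl

lemma cover : Set.Ioc (0:ℝ) 1 ⊆ ⋃ k : ℕ, Iset (k+1) := by
  intro ω hω
  obtain ⟨hω0, hω1⟩ := hω
  have hex : ∃ j : ℕ, ((2:ℝ)^j)⁻¹ < ω := by
    obtain ⟨j, hj⟩ := pow_unbounded_of_one_lt (ω⁻¹) (by norm_num : (1:ℝ) < 2)
    refine ⟨j, ?_⟩
    have := inv_strictAnti₀ (by positivity : (0:ℝ) < ω⁻¹) hj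
    rwa [inv_inv] at this
  classical
  set n := Nat.find hex with hn
  have hspec : ((2:ℝ)^n)⁻¹ < ω := Nat.find_spec hex
  have hn1 : 1 ≤ n := by
    by_contra hcon
    push_neg at hcon
    interval_cases n
    · simp at hspec; linarith
  obtain ⟨k, hk⟩ : ∃ k, n = k + 1 := ⟨n - 1, (Nat.succ_pred_eq_of_pos hn1).symm⟩
  refine Set.mem_iUnion.mpr ⟨k, ?_⟩
  rw [Iset_eq]
  refine ⟨by rw [← hk]; exact hspec, ?_⟩
  have := Nat.find_min hex (m := k) (by omega)
  exact not_lt.mp this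

end SepAux

open SepAux

/-- Characterization of separating measures in the one-period model of Example 8 of
Biagini–Frittelli: a probability `Q ≪ P` with density constantly `q₁ n` on `J_n^1` and
`q₂ n` on `J_n^2` satisfies `α·X₁ ∈ L¹(Q)` and `E_Q[α·X₁] ≤ 0` for every admissible
strategy `α` iff `q₁ n = n · q₂ n` for every `n ≥ 1`. -/
theorem separating_iff_density_relation
    (X₁ : ℝ → ℝ)
    (hX₁ : ∀ n : ℕ, 1 ≤ n →
      (∀ ω ∈ J1 n, X₁ ω = (n : ℝ)) ∧ (∀ ω ∈ J2 n, X₁ ω = -((n : ℝ) ^ 2)))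
    (q₁ q₂ : ℕ → ℝ) (hq₁ : ∀ n, 0 ≤ q₁ n) (hq₂ : ∀ n, 0 ≤ q₂ n)
    (d : ℝ → ℝ) (hd : Measurable d)
    (hdJ : ∀ n : ℕ, 1 ≤ n → (∀ ω ∈ J1 n, d ω = q₁ n) ∧ (∀ ω ∈ J2 n, d ω = q₂ n))
    (Q : Measure ℝ)
    (hQ : Q = Pmeas.withDensity (fun ω => ENNReal.ofReal (d ω)))
    (hQp : IsProbabilityMeasure Q) :
    (∀ α : ℝ → ℝ, IsAdmissible X₁ α →
        Integrable (fun ω => α ω * X₁ ω) Q ∧ ∫ ω, α ω * X₁ ω ∂Q ≤ 0) ↔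
      ∀ n : ℕ, 1 ≤ n → q₁ n = (n : ℝ) * q₂ n := by
  -- measures of the pieces under Q
  have hQ1 : ∀ k : ℕ, Q (J1 (k+1)) =
      ENNReal.ofReal (q₁ (k+1)) * ENNReal.ofReal ((2:ℝ)^(k+2))⁻¹ := by
    intro k
    rw [hQ, withDensity_apply _ (measJ1 _)]
    rw [setLIntegral_congr_fun (measJ1 (k+1))
      (fun ω hω => by
        rw [(hdJ (k+1) (by omega)).1 ω hω])]
    rw [setLIntegral_const, P_J1]
  have hQ2 : ∀ k : ℕ, Q (J2 (k+1)) =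
      ENNReal.ofReal (q₂ (k+1)) * ENNReal.ofReal ((2:ℝ)^(k+2))⁻¹ := by
    intro k
    rw [hQ, withDensity_apply _ (measJ2 _)]
    rw [setLIntegral_congr_fun (measJ2 (k+1))
      (fun ω hω => by
        rw [(hdJ (k+1) (by omega)).2 ω hω])]
    rw [setLIntegral_const, P_J2]
  have hlen_pos : ∀ k : ℕ, (0:ℝ) < ((2:ℝ)^(k+2))⁻¹ := fun k => by positivity
  have hQ1t : ∀ k : ℕ, (Q (J1 (k+1))).toReal = q₁ (k+1) * ((2:ℝ)^(k+2))⁻¹ := by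
    intro k
    rw [hQ1, ENNReal.toReal_mul, ENNReal.toReal_ofReal (hq₁ _),
      ENNReal.toReal_ofReal (hlen_pos k).le]
  have hQ2t : ∀ k : ℕ, (Q (J2 (k+1))).toReal = q₂ (k+1) * ((2:ℝ)^(k+2))⁻¹ := by
    intro k
    rw [hQ2, ENNReal.toReal_mul, ENNReal.toReal_ofReal (hq₂ _),
      ENNReal.toReal_ofReal (hlen_pos k).le]
  constructor
  · -- separating ⟹ density relation
    intro h n hn
    obtain ⟨k, rfl⟩ : ∃ k, n = k + 1 := ⟨n - 1, (Nat.succ_pred_eq_of_pos hn).symm⟩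
    -- for s = 1 and s = -1 use the strategy which is s on I_{k+1} and 0 elsewhere
    have key : ∀ s : ℝ, s = 1 ∨ s = -1 →
        s * ((↑(k+1) : ℝ) * (Q (J1 (k+1))).toReal
          + (-((↑(k+1) : ℝ)^2)) * (Q (J2 (k+1))).toReal) ≤ 0 := by
      intro s hs
      set α : ℝ → ℝ := (Iset (k+1)).indicator (fun _ => s) with hα
      have hadm : IsAdmissible X₁ α := by
        constructor
        · refine ⟨fun m => if m = k+1 then s else 0, ?_⟩
          intro m hm ω hω
          obtain ⟨j, rfl⟩ : ∃ j, m = j + 1 := ⟨m - 1, (Nat.succ_pred_eq_of_pos hm).symm⟩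
          by_cases hjk : j = k
          · subst hjk
            simp [hα, Set.indicator_of_mem hω]
          · have hnot : ω ∉ Iset (k+1) :=
              fun hmem => (Iset_disj hjk).ne_of_mem hω hmem rfl
            simp [hα, Set.indicator_of_notMem hnot, hjk]
        · refine ⟨(↑(k+1):ℝ)^2 + (↑(k+1):ℝ) + 1, by positivity, ?_⟩
          refine Filter.Eventually.of_forall (fun ω => ?_)
          have hk0 : (0:ℝ) ≤ (↑(k+1):ℝ) := by positivity
          have hk2 : (0:ℝ) ≤ (↑(k+1):ℝ)^2 := by positivity
          by_cases hmem : ω ∈ Iset (k+1)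
          · have haω : α ω = s := by rw [hα, Set.indicator_of_mem hmem]
            rw [← J_union] at hmem
            rcases hmem with hmem | hmem
            · rw [haω, (hX₁ (k+1) (by omega)).1 ω hmem]
              rcases hs with rfl | rfl <;> push_cast <;> nlinarith
            · rw [haω, (hX₁ (k+1) (by omega)).2 ω hmem]
              rcases hs with rfl | rfl <;> push_cast <;> nlinarith
          · simp [hα, Set.indicator_of_notMem hmem]
            nlinarith
      obtain ⟨hint, hle⟩ := h α hadm
      have heq : (fun ω => α ω * X₁ ω) = (Iset (k+1)).indicator (fun ω => s * X₁ ω) := by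
        funext ω
        by_cases hmem : ω ∈ Iset (k+1)
        · simp [hα, Set.indicator_of_mem hmem]
        · simp [hα, Set.indicator_of_notMem hmem]
      rw [heq, integral_indicator (measIset _)] at hle
      rw [heq, integrable_indicator_iff (measIset _)] at hint
      rw [← J_union] at hle
      rw [setIntegral_union (J1_disj_J2 k) (measJ2 _)
        (hint.mono_set (by rw [← J_union]; exact Set.subset_union_left))
        (hint.mono_set (by rw [← J_union]; exact Set.subset_union_right))] at hle
      rw [setIntegral_congr_fun (measJ1 _)
        (fun ω hω => by rw [(hX₁ (k+1) (by omega)).1 ω hω])] at hle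
      rw [setIntegral_congr_fun (measJ2 _)
        (fun ω hω => by rw [(hX₁ (k+1) (by omega)).2 ω hω])] at hle
      rw [setIntegral_const, setIntegral_const, smul_eq_mul, smul_eq_mul] at hle
      calc s * ((↑(k+1) : ℝ) * (Q (J1 (k+1))).toReal
          + (-((↑(k+1) : ℝ)^2)) * (Q (J2 (k+1))).toReal)
          = (Q (J1 (k+1))).toReal * (s * (↑(k+1):ℝ))
            + (Q (J2 (k+1))).toReal * (s * -((↑(k+1):ℝ)^2)) := by ring
        _ ≤ 0 := hle
    have h1 := key 1 (Or.inl rfl)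
    have h2 := key (-1) (Or.inr rfl)
    rw [hQ1t, hQ2t] at h1 h2
    have hkpos : (0:ℝ) < (↑(k+1) : ℝ) := by positivity
    have hL := hlen_pos k
    have heq : ((↑(k+1):ℝ) * ((2:ℝ)^(k+2))⁻¹) * q₁ (k+1)
        = ((↑(k+1):ℝ) * ((2:ℝ)^(k+2))⁻¹) * ((↑(k+1):ℝ) * q₂ (k+1)) := by nlinarith
    exact mul_left_cancel₀ (ne_of_gt (mul_pos hkpos hL)) heq
  · -- density relation ⟹ separating
    intro hrel α hadm
    obtain ⟨⟨a, ha⟩, c, hc0, hcae⟩ := hadm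
    have hval1 : ∀ k : ℕ, ∀ ω ∈ J1 (k+1), α ω * X₁ ω = a (k+1) * (↑(k+1):ℝ) := by
      intro k ω hω
      rw [ha (k+1) (by omega) ω (J1_subset_Iset k hω), (hX₁ (k+1) (by omega)).1 ω hω]
    have hval2 : ∀ k : ℕ, ∀ ω ∈ J2 (k+1), α ω * X₁ ω = a (k+1) * (-((↑(k+1):ℝ)^2)) := by
      intro k ω hω
      rw [ha (k+1) (by omega) ω (J2_subset_Iset k hω), (hX₁ (k+1) (by omega)).2 ω hω,
        mul_neg]
    -- existence of points where the admissibility bound holds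
    have hpt : ∀ k : ℕ, ∀ S : Set ℝ, S = J1 (k+1) ∨ S = J2 (k+1) →
        ∃ ω ∈ S, -c ≤ α ω * X₁ ω := by
      intro k S hS
      by_contra hcon
      push_neg at hcon
      have hsub : S ⊆ {ω | ¬ (-c ≤ α ω * X₁ ω)} := fun ω hω => not_le.mpr (hcon ω hω)
      have h0 : Pmeas S = 0 := measure_mono_null hsub (ae_iff.mp hcae)
      have hne : Pmeas S ≠ 0 := by
        rcases hS with rfl | rfl
        · rw [P_J1]; exact (ENNReal.ofReal_pos.mpr (hlen_pos k)).ne'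
        · rw [P_J2]; exact (ENNReal.ofReal_pos.mpr (hlen_pos k)).ne'
      exact hne h0
    have hb1 : ∀ k : ℕ, -c ≤ a (k+1) * (↑(k+1):ℝ) := by
      intro k
      obtain ⟨ω, hω, hb⟩ := hpt k _ (Or.inl rfl)
      rwa [hval1 k ω hω] at hb
    have hb2 : ∀ k : ℕ, a (k+1) * ((↑(k+1):ℝ)^2) ≤ c := by
      intro k
      obtain ⟨ω, hω, hb⟩ := hpt k _ (Or.inr rfl)
      rw [hval2 k ω hω] at hb
      linarith
    have hk1 : ∀ k : ℕ, (1:ℝ) ≤ (↑(k+1):ℝ) := by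
      intro k; push_cast; linarith [Nat.cast_nonneg (α := ℝ) k]
    have hA : ∀ k : ℕ, |a (k+1) * (↑(k+1):ℝ)| ≤ c := by
      intro k
      rw [abs_le]
      refine ⟨hb1 k, ?_⟩
      rcases le_or_gt (a (k+1)) 0 with hle | hlt
      · have : a (k+1) * (↑(k+1):ℝ) ≤ 0 :=
          mul_nonpos_of_nonpos_of_nonneg hle (by positivity)
        linarith
      · nlinarith [hb2 k, hk1 k]
    have hB : ∀ k : ℕ, |a (k+1) * ((↑(k+1):ℝ)^2)| ≤ c * (↑(k+1):ℝ) := by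
      intro k
      rw [abs_le]
      constructor
      · nlinarith [mul_le_mul_of_nonneg_right (hb1 k)
          (by positivity : (0:ℝ) ≤ (↑(k+1):ℝ))]
      · nlinarith [hb2 k, hk1 k, hc0]
    -- the partition of (0,1] into the pieces J1, J2
    set S : ℕ × Bool → Set ℝ := fun p => bif p.2 then J1 (p.1+1) else J2 (p.1+1) with hSdef
    have hmeasS : ∀ p, MeasurableSet (S p) := by
      rintro ⟨k, b⟩; cases b
      · exact measJ2 _
      · exact measJ1 _
    have hsubS : ∀ p, S p ⊆ Iset (p.1+1) := by
      rintro ⟨k, b⟩; cases b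
      · exact J2_subset_Iset k
      · exact J1_subset_Iset k
    have hdisjS : Pairwise (Function.onFun Disjoint S) := by
      rintro ⟨k, b⟩ ⟨l, b'⟩ hne
      by_cases hk : k = l
      · subst hk
        have hb : b ≠ b' := fun hbb => hne (by rw [hbb])
        cases b <;> cases b'
        · exact absurd rfl hb
        · exact (J1_disj_J2 k).symm
        · exact J1_disj_J2 k
        · exact absurd rfl hb
      · exact (Iset_disj hk).mono (hsubS ⟨k, b⟩) (hsubS ⟨l, b'⟩)
    have hQU : ∀ᵐ ω ∂Q, ω ∈ ⋃ p, S p := by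
      have hcov : Set.Ioc (0:ℝ) 1 ⊆ ⋃ p, S p := by
        intro ω hω
        obtain ⟨k, hk⟩ := Set.mem_iUnion.mp (cover hω)
        rw [← J_union] at hk
        rcases hk with hk | hk
        · exact Set.mem_iUnion.mpr ⟨(k, true), hk⟩
        · exact Set.mem_iUnion.mpr ⟨(k, false), hk⟩
      have hP0 : Pmeas (⋃ p, S p)ᶜ = 0 := by
        rw [Pmeas, Measure.restrict_apply (MeasurableSet.compl (MeasurableSet.iUnion hmeasS))]
        have he : (⋃ p, S p)ᶜ ∩ Set.Ioc (0:ℝ) 1 = ∅ := by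
          rw [Set.eq_empty_iff_forall_notMem]
          rintro ω ⟨hω1, hω2⟩
          exact hω1 (hcov hω2)
        rw [he, measure_empty]
      have hQ0 : Q (⋃ p, S p)ᶜ = 0 := by
        rw [hQ]
        exact withDensity_absolutelyContinuous _ _ hP0
      rw [ae_iff]
      convert hQ0 using 2
      rfl
    -- a.e. strong measurability of the gain
    have haesm : AEStronglyMeasurable (fun ω => α ω * X₁ ω) Q := by
      set g : ℕ → ℝ → ℝ := fun K ω => ∑ k ∈ Finset.range K,
        ((J1 (k+1)).indicator (fun _ => a (k+1) * (↑(k+1):ℝ)) ω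
          + (J2 (k+1)).indicator (fun _ => -(a (k+1) * ((↑(k+1):ℝ)^2))) ω) with hgdef
      have hg : ∀ K : ℕ, Measurable (g K) := by
        intro K
        apply Finset.measurable_sum
        intro k _
        exact ((measurable_const.indicator (measJ1 _)).add
          (measurable_const.indicator (measJ2 _)))
      have htend : ∀ ω ∈ ⋃ p, S p, Filter.Tendsto (fun K => g K ω)
          Filter.atTop (nhds (α ω * X₁ ω)) := by
        intro ω hω
        obtain ⟨⟨k₀, b⟩, hmem⟩ := Set.mem_iUnion.mp hω
        have hIk : ω ∈ Iset (k₀+1) := hsubS _ hmem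
        have hzero : ∀ k : ℕ, k ≠ k₀ →
            (J1 (k+1)).indicator (fun _ => a (k+1) * (↑(k+1):ℝ)) ω
            + (J2 (k+1)).indicator (fun _ => -(a (k+1) * ((↑(k+1):ℝ)^2))) ω = 0 := by
          intro k hkne
          have hnot : ω ∉ Iset (k+1) := fun hm => (Iset_disj hkne).ne_of_mem hm hIk rfl
          rw [Set.indicator_of_notMem (fun hm => hnot (J1_subset_Iset k hm)),
            Set.indicator_of_notMem (fun hm => hnot (J2_subset_Iset k hm)), add_zero]
        have hterm : (J1 (k₀+1)).indicator (fun _ => a (k₀+1) * (↑(k₀+1):ℝ)) ω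
            + (J2 (k₀+1)).indicator (fun _ => -(a (k₀+1) * ((↑(k₀+1):ℝ)^2))) ω
            = α ω * X₁ ω := by
          cases b
          · have hm2 : ω ∈ J2 (k₀+1) := hmem
            have hn1 : ω ∉ J1 (k₀+1) := fun hm => (J1_disj_J2 k₀).ne_of_mem hm hm2 rfl
            rw [Set.indicator_of_notMem hn1, Set.indicator_of_mem hm2, zero_add,
              hval2 k₀ ω hm2, mul_neg]
          · have hm1 : ω ∈ J1 (k₀+1) := hmem
            have hn2 : ω ∉ J2 (k₀+1) := fun hm => (J1_disj_J2 k₀).ne_of_mem hm1 hm rfl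
            rw [Set.indicator_of_mem hm1, Set.indicator_of_notMem hn2, add_zero,
              hval1 k₀ ω hm1]
        apply tendsto_atTop_of_eventually_const (i₀ := k₀ + 1)
        intro K hK
        rw [hgdef]
        simp only
        rw [Finset.sum_eq_single_of_mem k₀ (Finset.mem_range.mpr (by omega))
          (fun k _ hk => hzero k hk), hterm]
      exact aestronglyMeasurable_of_tendsto_ae Filter.atTop
        (fun K => (hg K).aestronglyMeasurable)
        (hQU.mono (fun ω hω => htend ω hω))
    -- finiteness of the integral of |α·X₁|
    have hJ1disj : Pairwise (Function.onFun Disjoint (fun k : ℕ => J1 (k+1))) :=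
      fun k l hkl => (Iset_disj hkl).mono (J1_subset_Iset k) (J1_subset_Iset l)
    have hsum1 : ∑' k : ℕ, Q (J1 (k+1)) ≤ 1 := by
      rw [← measure_iUnion hJ1disj (fun k => measJ1 _)]
      exact prob_le_one
    have hQJ1eq : ∀ k : ℕ, ENNReal.ofReal ((↑(k+1):ℝ)) * Q (J2 (k+1)) = Q (J1 (k+1)) := by
      intro k
      rw [hQ2 k, hQ1 k, ← mul_assoc, ← ENNReal.ofReal_mul (by positivity),
        hrel (k+1) (by omega)]
    have hbound : ∀ p : ℕ × Bool, ∫⁻ ω in S p, ‖α ω * X₁ ω‖₊ ∂Q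
        ≤ ENNReal.ofReal c * Q (J1 (p.1+1)) := by
      rintro ⟨k, b⟩
      cases b
      · show ∫⁻ ω in J2 (k+1), (‖α ω * X₁ ω‖₊ : ℝ≥0∞) ∂Q ≤ _
        rw [setLIntegral_congr_fun (measJ2 _) (fun ω hω => by
            rw [hval2 k ω hω, ← enorm_eq_nnnorm, Real.enorm_eq_ofReal_abs, mul_neg, abs_neg]),
          setLIntegral_const]
        calc ENNReal.ofReal |a (k+1) * ((↑(k+1):ℝ)^2)| * Q (J2 (k+1))
            ≤ ENNReal.ofReal (c * (↑(k+1):ℝ)) * Q (J2 (k+1)) := by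
              gcongr
              exact hB k
          _ = ENNReal.ofReal c * (ENNReal.ofReal ((↑(k+1):ℝ)) * Q (J2 (k+1))) := by
              rw [ENNReal.ofReal_mul hc0, mul_assoc]
          _ = ENNReal.ofReal c * Q (J1 (k+1)) := by rw [hQJ1eq k]
      · show ∫⁻ ω in J1 (k+1), (‖α ω * X₁ ω‖₊ : ℝ≥0∞) ∂Q ≤ _
        rw [setLIntegral_congr_fun (measJ1 _) (fun ω hω => by
            rw [hval1 k ω hω, ← enorm_eq_nnnorm, Real.enorm_eq_ofReal_abs]),
          setLIntegral_const]
        gcongr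
        exact hA k
    have hfin : HasFiniteIntegral (fun ω => α ω * X₁ ω) Q := by
      show (∫⁻ ω, ‖α ω * X₁ ω‖₊ ∂Q) < ⊤
      calc (∫⁻ ω, ‖α ω * X₁ ω‖₊ ∂Q)
          = ∫⁻ ω in ⋃ p, S p, ‖α ω * X₁ ω‖₊ ∂Q := by
            rw [Measure.restrict_eq_self_of_ae_mem hQU]
        _ = ∑' p : ℕ × Bool, ∫⁻ ω in S p, ‖α ω * X₁ ω‖₊ ∂Q :=
            lintegral_iUnion hmeasS hdisjS _
        _ ≤ ∑' p : ℕ × Bool, ENNReal.ofReal c * Q (J1 (p.1+1)) :=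
            ENNReal.tsum_le_tsum hbound
        _ = ∑' k : ℕ, ∑' b : Bool, ENNReal.ofReal c * Q (J1 (k+1)) :=
            ENNReal.tsum_prod'
        _ = ∑' k : ℕ, (ENNReal.ofReal c * Q (J1 (k+1))
              + ENNReal.ofReal c * Q (J1 (k+1))) := by
            congr 1; funext k; exact tsum_bool _
        _ = (∑' k : ℕ, ENNReal.ofReal c * Q (J1 (k+1)))
              + (∑' k : ℕ, ENNReal.ofReal c * Q (J1 (k+1))) := ENNReal.tsum_add
        _ = ENNReal.ofReal c * (∑' k : ℕ, Q (J1 (k+1)))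
              + ENNReal.ofReal c * (∑' k : ℕ, Q (J1 (k+1))) := by
            rw [ENNReal.tsum_mul_left]
        _ ≤ ENNReal.ofReal c * 1 + ENNReal.ofReal c * 1 := by gcongr <;> exact hsum1
        _ < ⊤ := by
            simp only [mul_one]
            exact ENNReal.add_lt_top.mpr ⟨ENNReal.ofReal_lt_top, ENNReal.ofReal_lt_top⟩
    have hint : Integrable (fun ω => α ω * X₁ ω) Q := ⟨haesm, hfin⟩
    refine ⟨hint, ?_⟩
    -- the integral vanishes
    have hHS : HasSum (fun p : ℕ × Bool => ∫ ω in S p, α ω * X₁ ω ∂Q)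
        (∫ ω, α ω * X₁ ω ∂Q) := by
      have h := hasSum_integral_iUnion hmeasS hdisjS
        (hint.integrableOn (s := (⋃ p, S p)))
      rwa [Measure.restrict_eq_self_of_ae_mem hQU] at h
    have hfiber : ∀ k : ℕ, HasSum (fun b : Bool => ∫ ω in S (k, b), α ω * X₁ ω ∂Q) 0 := by
      intro k
      have h := hasSum_fintype (fun b : Bool => ∫ ω in S (k, b), α ω * X₁ ω ∂Q)
      have e1 : ∫ ω in S (k, true), α ω * X₁ ω ∂Q
          = (q₁ (k+1) * ((2:ℝ)^(k+2))⁻¹) * (a (k+1) * (↑(k+1):ℝ)) := by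
        show ∫ ω in J1 (k+1), α ω * X₁ ω ∂Q = _
        rw [setIntegral_congr_fun (measJ1 _) (fun ω hω => hval1 k ω hω),
          setIntegral_const, smul_eq_mul, measureReal_def, hQ1t]
      have e2 : ∫ ω in S (k, false), α ω * X₁ ω ∂Q
          = (q₂ (k+1) * ((2:ℝ)^(k+2))⁻¹) * (a (k+1) * (-((↑(k+1):ℝ)^2))) := by
        show ∫ ω in J2 (k+1), α ω * X₁ ω ∂Q = _
        rw [setIntegral_congr_fun (measJ2 _) (fun ω hω => hval2 k ω hω),
          setIntegral_const, smul_eq_mul, measureReal_def, hQ2t]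
      have hzero : ∑ b : Bool, ∫ ω in S (k, b), α ω * X₁ ω ∂Q = 0 := by
        rw [Fintype.sum_bool, e1, e2, hrel (k+1) (by omega)]
        ring
      rwa [hzero] at h
    have hfin0 : HasSum (fun _ : ℕ => (0:ℝ)) (∫ ω, α ω * X₁ ω ∂Q) :=
      hHS.prod_fiberwise hfiber
    have : ∫ ω, α ω * X₁ ω ∂Q = 0 := (hasSum_zero.unique hfin0).symm
    linarith
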